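/- Let μ > 0, let φ₀(ξ) = (4πμ)^{−1/2} e^{−ξ²/(4μ)}, and for n ∈ ℕ let φ_n be the n-th derivative of φ₀. Then for every n ∈ ℕ and every ξ ∈ ℝ, μ φ_n''(ξ) + (1/2)(φ_n(ξ) + ξ φ_n'(ξ)) = −(n/2) φ_n(ξ); that is, φ_n is an eigenfunction of the operator L_μ with eigenvalue −n/2. -/

import Mathlib

open scoped ContDiff


/-- The Gaussian `φ₀(ξ) = (4πμ)^{−1/2} e^{−ξ²/(4μ)}`. -/
noncomputable def phi0 (μ ξ : ℝ) : ℝ :=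
  (Real.sqrt (4 * Real.pi * μ))⁻¹ * Real.exp (-ξ ^ 2 / (4 * μ))

lemma phi0_contDiff (μ : ℝ) : ContDiff ℝ ∞ (phi0 μ) := by
  unfold phi0
  exact contDiff_const.mul (Real.contDiff_exp.comp (((contDiff_id.pow 2).neg).div_const _))

lemma phi0_hasDerivAt (μ : ℝ) (hμ : 0 < μ) (ξ : ℝ) :
    HasDerivAt (phi0 μ) (-(ξ / (2 * μ)) * phi0 μ ξ) ξ := by
  have h1 : HasDerivAt (fun x : ℝ => -x ^ 2 / (4 * μ)) (-(2 * ξ) / (4 * μ)) ξ := by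
    simpa using ((hasDerivAt_pow 2 ξ).neg.div_const (4 * μ))
  have h2 := (h1.exp).const_mul (Real.sqrt (4 * Real.pi * μ))⁻¹
  have : phi0 μ = fun x => (Real.sqrt (4 * Real.pi * μ))⁻¹ * Real.exp (-x ^ 2 / (4 * μ)) := rfl
  rw [this]
  refine h2.congr_deriv ?_
  beta_reduce
  field_simp
  ring

lemma contDiff_iter (μ : ℝ) (n : ℕ) : ContDiff ℝ ∞ (iteratedDeriv n (phi0 μ)) := by
  rw [iteratedDeriv_eq_iterate]
  exact ContDiff.iterate_deriv n (phi0_contDiff μ)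

/-- for every `n ∈ ℕ`, the `n`-th derivative `φ_n = ∂_ξ^n φ₀` satisfies
`μ φ_n'' + (1/2)(φ_n + ξ φ_n') = −(n/2) φ_n`, i.e. `φ_n` is an eigenfunction of `L_μ`
with eigenvalue `−n/2`. -/
theorem stmt6 (μ : ℝ) (hμ : 0 < μ) :
    ∀ n : ℕ, ∀ ξ : ℝ,
      μ * deriv (deriv (iteratedDeriv n (phi0 μ))) ξ
          + 1 / 2 * (iteratedDeriv n (phi0 μ) ξ + ξ * deriv (iteratedDeriv n (phi0 μ)) ξ)
        = -((n : ℝ) / 2) * iteratedDeriv n (phi0 μ) ξ := by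
  intro n
  induction n with
  | zero =>
    intro ξ
    simp only [iteratedDeriv_zero, Nat.cast_zero]
    have hd : deriv (phi0 μ) = fun x => -(x / (2 * μ)) * phi0 μ x :=
      funext fun x => (phi0_hasDerivAt μ hμ x).deriv
    rw [hd]
    have h2 : HasDerivAt (fun x => -(x / (2 * μ)) * phi0 μ x)
        (-(1 / (2 * μ)) * phi0 μ ξ + -(ξ / (2 * μ)) * (-(ξ / (2 * μ)) * phi0 μ ξ)) ξ := by
      have ha : HasDerivAt (fun x : ℝ => -(x / (2 * μ))) (-(1 / (2 * μ))) ξ := by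
        simpa [Pi.neg_def] using ((hasDerivAt_id ξ).div_const (2 * μ)).neg
      exact ha.mul (phi0_hasDerivAt μ hμ ξ)
    rw [h2.deriv]
    beta_reduce
    field_simp
    ring
  | succ n ih =>
    intro ξ
    set f := iteratedDeriv n (phi0 μ) with hf
    have hc : ContDiff ℝ ∞ f := contDiff_iter μ n
    have hc1 : ContDiff ℝ ∞ (deriv f) := (contDiff_infty_iff_deriv.mp hc).2
    have hc2 : ContDiff ℝ ∞ (deriv (deriv f)) := (contDiff_infty_iff_deriv.mp hc1).2
    have d1 : HasDerivAt f (deriv f ξ) ξ :=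
      (hc.differentiable (by norm_num) ξ).hasDerivAt
    have d2 : HasDerivAt (deriv f) (deriv (deriv f) ξ) ξ :=
      (hc1.differentiable (by norm_num) ξ).hasDerivAt
    have d3 : HasDerivAt (deriv (deriv f)) (deriv (deriv (deriv f)) ξ) ξ :=
      (hc2.differentiable (by norm_num) ξ).hasDerivAt
    have hFG : (fun x => μ * deriv (deriv f) x + 1 / 2 * (f x + x * deriv f x))
        = fun x => -((n : ℝ) / 2) * f x := funext fun x => ih x
    have hF : HasDerivAt (fun x => μ * deriv (deriv f) x + 1 / 2 * (f x + x * deriv f x))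
        (μ * deriv (deriv (deriv f)) ξ
          + 1 / 2 * (deriv f ξ + (1 * deriv f ξ + ξ * deriv (deriv f) ξ))) ξ :=
      (d3.const_mul μ).add ((d1.add ((hasDerivAt_id ξ).mul d2)).const_mul (1 / 2))
    have hG : HasDerivAt (fun x => -((n : ℝ) / 2) * f x) (-((n : ℝ) / 2) * deriv f ξ) ξ :=
      d1.const_mul _
    have key : μ * deriv (deriv (deriv f)) ξ
          + 1 / 2 * (deriv f ξ + (1 * deriv f ξ + ξ * deriv (deriv f) ξ))
        = -((n : ℝ) / 2) * deriv f ξ := by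
      have := hF.deriv
      rw [hFG] at this
      rw [← this, hG.deriv]
    rw [iteratedDeriv_succ, ← hf]
    push_cast
    linarith [key]
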